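/- Let U ⊆ ℝ^m be a closed cone, ν a strictly increasing continuous bijection of [0,∞), f continuous with rescaled dynamics f̄(x,u) = f(x,u)/(1+ν(|u|)), and extended dynamics F(x,w₀,w) = lim_{r→w₀⁺} f̄(x, (w/|w|)·ν⁻¹(|w|/r)) assumed to exist, be continuous and locally bounded on closure(ℝⁿ∖C) × closure(𝕌), where 𝕌 = {(w₀,w) ∈ (0,∞)×U : w₀+|w|=1}. Then for every x ∉ C and every p ∈ ℝⁿ, the Hamiltonians coincide: inf_{u∈U} ⟨p, f̄(x,u)⟩ = inf_{(w₀,w)∈closure(𝕌)} ⟨p, F(x,w₀,w)⟩. Consequently a function W is a control Lyapunov function for the rescaled system if and only if it is one for the extended system. -/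

import Mathlib

open Set Filter Metric
open scoped RealInnerProductSpace Topology

/-- The proximal subdifferential of `W` at `x`. -/
def proxSubdiff {n : ℕ} (W : EuclideanSpace ℝ (Fin n) → ℝ) (x : EuclideanSpace ℝ (Fin n)) :
    Set (EuclideanSpace ℝ (Fin n)) :=
  {p | ∃ σ > (0:ℝ), ∃ η > (0:ℝ), ∀ y, ‖y - x‖ ≤ η →
    ⟪p, y - x⟫ ≤ W y - W x + σ * ‖y - x‖ ^ 2}

/-- The limiting (Mordukhovich) subdifferential of `W` at `x`. -/
def limSubdiff {n : ℕ} (W : EuclideanSpace ℝ (Fin n) → ℝ) (x : EuclideanSpace ℝ (Fin n)) :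
    Set (EuclideanSpace ℝ (Fin n)) :=
  {p | ∃ xs ps : ℕ → EuclideanSpace ℝ (Fin n),
    (∀ i, ps i ∈ proxSubdiff W (xs i)) ∧
    Tendsto xs atTop (nhds x) ∧ Tendsto ps atTop (nhds p)}

/-- `W` is a control Lyapunov function for the system `ẋ = g(x,u)`, `u ∈ V`, with
target `C`:  locally Lipschitz on the closure of the complement of `C`, positive
definite and proper on `ℝⁿ ∖ C`, and satisfying the infinitesimal decrease condition
with some continuous, strictly increasing, positive decrease rate `γ`. -/
def IsCLF {n : ℕ} {F : Type*}
    (g : EuclideanSpace ℝ (Fin n) → F → EuclideanSpace ℝ (Fin n))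
    (V : Set F) (C : Set (EuclideanSpace ℝ (Fin n)))
    (W : EuclideanSpace ℝ (Fin n) → ℝ) : Prop :=
  (∀ K ⊆ closure Cᶜ, IsCompact K → ∃ L : NNReal, LipschitzOnWith L W K) ∧
  (∀ x ∉ C, 0 < W x) ∧ (∀ x ∈ frontier C, W x = 0) ∧ (∀ x, 0 ≤ W x) ∧
  (∀ K : Set ℝ, IsCompact K → IsCompact (Cᶜ ∩ W ⁻¹' K)) ∧
  ∃ γ : ℝ → ℝ, ContinuousOn γ (Set.Ioi 0) ∧ StrictMonoOn γ (Set.Ioi 0) ∧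
    (∀ r > (0:ℝ), 0 < γ r) ∧
    ∀ x ∉ C, ∀ p ∈ limSubdiff W x,
      sInf {y : ℝ | ∃ u ∈ V, y = ⟪p, g x u⟫} < -γ (W x)

/-- If `A ⊆ B ⊆ closure A` then the infima agree. -/
lemma sInf_eq_of_between {A B : Set ℝ} (h1 : A ⊆ B) (h2 : B ⊆ closure A) :
    sInf A = sInf B := by
  rcases A.eq_empty_or_nonempty with rfl | hA
  · have hB : B = ∅ := eq_empty_of_subset_empty (by simpa using h2)
    rw [hB]
  · by_cases hbdd : BddBelow A
    · have hBne : B.Nonempty := hA.mono h1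
      have hlb : sInf A ∈ lowerBounds (closure A) := by
        rw [lowerBounds_closure]
        exact (isGLB_csInf hA hbdd).1
      have hbddB : BddBelow B := ⟨sInf A, fun b hb => hlb (h2 hb)⟩
      exact le_antisymm (le_csInf hBne fun b hb => hlb (h2 hb)) (csInf_le_csInf hbddB hA h1)
    · have hbddB : ¬ BddBelow B := fun h => hbdd (h.mono h1)
      rw [csInf_of_not_bddBelow hbdd, csInf_of_not_bddBelow hbddB]

theorem stmt_6 {n m : ℕ}
    (U : Set (EuclideanSpace ℝ (Fin m))) (hUcl : IsClosed U)
    (hUcone : ∀ c : ℝ, 0 ≤ c → ∀ v ∈ U, c • v ∈ U)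
    (C : Set (EuclideanSpace ℝ (Fin n))) (hC : IsClosed C)
    (ν : ℝ → ℝ) (hνmono : StrictMonoOn ν (Set.Ici 0))
    (hνbij : Set.BijOn ν (Set.Ici 0) (Set.Ici 0))
    (νinv : ℝ → ℝ) (hνinv : Set.InvOn νinv ν (Set.Ici 0) (Set.Ici 0))
    (f : EuclideanSpace ℝ (Fin n) → EuclideanSpace ℝ (Fin m) → EuclideanSpace ℝ (Fin n))
    (hf : ContinuousOn (fun q : EuclideanSpace ℝ (Fin n) × EuclideanSpace ℝ (Fin m) =>
      f q.1 q.2) (Cᶜ ×ˢ U))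
    -- the compactified control set 𝕌
    (𝕌 : Set (ℝ × EuclideanSpace ℝ (Fin m)))
    (h𝕌 : 𝕌 = {q : ℝ × EuclideanSpace ℝ (Fin m) | 0 < q.1 ∧ q.2 ∈ U ∧ q.1 + ‖q.2‖ = 1})
    -- the extended dynamics F, assumed to exist as a limit of the rescaled dynamics,
    -- continuous and locally bounded on closure(ℝⁿ∖C) × closure 𝕌
    (FF : EuclideanSpace ℝ (Fin n) → ℝ → EuclideanSpace ℝ (Fin m) → EuclideanSpace ℝ (Fin n))
    (hFFlim : ∀ x ∈ closure Cᶜ, ∀ q ∈ closure 𝕌,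
      Tendsto (fun r : ℝ =>
          (1 + ν ‖(νinv (‖q.2‖ / r)) • (‖q.2‖⁻¹ • q.2)‖)⁻¹ •
            f x ((νinv (‖q.2‖ / r)) • (‖q.2‖⁻¹ • q.2)))
        (nhdsWithin q.1 (Set.Ioi q.1)) (nhds (FF x q.1 q.2)))
    (hFFc : ContinuousOn
      (fun q : EuclideanSpace ℝ (Fin n) × ℝ × EuclideanSpace ℝ (Fin m) =>
        FF q.1 q.2.1 q.2.2) (closure Cᶜ ×ˢ closure 𝕌))
    (hFFbd : ∀ K : Set (EuclideanSpace ℝ (Fin n)), IsCompact K →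
      ∃ M : ℝ, ∀ x ∈ K ∩ closure Cᶜ, ∀ q ∈ closure 𝕌, ‖FF x q.1 q.2‖ ≤ M) :
    (∀ x ∉ C, ∀ p : EuclideanSpace ℝ (Fin n),
      sInf {y : ℝ | ∃ u ∈ U, y = ⟪p, (1 + ν ‖u‖)⁻¹ • f x u⟫} =
      sInf {y : ℝ | ∃ q ∈ closure 𝕌, y = ⟪p, FF x q.1 q.2⟫}) ∧
    ∀ W : EuclideanSpace ℝ (Fin n) → ℝ,
      IsCLF (fun x u => (1 + ν ‖u‖)⁻¹ • f x u) U C W ↔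
      IsCLF (fun x (q : ℝ × EuclideanSpace ℝ (Fin m)) => FF x q.1 q.2) (closure 𝕌) C W := by
  -- ν 0 = 0
  have hνnonneg : ∀ t, 0 ≤ t → 0 ≤ ν t := fun t ht => hνbij.1 ht
  have hν0 : ν 0 = 0 := by
    obtain ⟨s, hs, hνs⟩ := hνbij.2.2 (le_refl (0:ℝ))
    rcases eq_or_lt_of_le (show (0:ℝ) ≤ s from hs) with h | h
    · rw [← h] at hνs; exact hνs
    · have h1 : ν 0 < ν s := hνmono (le_refl (0:ℝ)) hs h
      have h2 : (0:ℝ) ≤ ν 0 := hνnonneg 0 le_rfl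
      rw [hνs] at h1; linarith
  have hνinv_nonneg : ∀ t, 0 ≤ t → 0 ≤ νinv t := by
    intro t ht
    obtain ⟨s, hs, rfl⟩ := hνbij.2.2 ht
    rw [hνinv.1 hs]; exact hs
  have hνinv_right : ∀ t, 0 ≤ t → ν (νinv t) = t := fun t ht => hνinv.2 ht
  -- continuity of νinv on [0, ∞)
  have hcont_inv : ContinuousOn νinv (Ici (0:ℝ)) := by
    have hgmono : StrictMono (fun s : Ici (0:ℝ) => (⟨ν s, hνbij.1 s.2⟩ : Ici (0:ℝ))) := by
      intro a b hab
      exact Subtype.mk_lt_mk.mpr (hνmono a.2 b.2 hab)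
    have hgsurj : Function.Surjective
        (fun s : Ici (0:ℝ) => (⟨ν s, hνbij.1 s.2⟩ : Ici (0:ℝ))) := by
      rintro ⟨t, ht⟩
      obtain ⟨s, hs, hνs⟩ := hνbij.2.2 ht
      exact ⟨⟨s, hs⟩, Subtype.ext hνs⟩
    set e := StrictMono.orderIsoOfSurjective _ hgmono hgsurj with he
    have hsymm : ∀ t : Ici (0:ℝ), (e.symm t : ℝ) = νinv t := by
      intro t
      have h1 : e ⟨νinv t, hνinv_nonneg t t.2⟩ = t := Subtype.ext (hνinv_right t t.2)
      have := e.symm_apply_eq.mpr h1.symm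
      rw [this]
    rw [continuousOn_iff_continuous_restrict]
    have hres : (Ici (0:ℝ)).restrict νinv = fun t : Ici (0:ℝ) => ((e.symm t : Ici (0:ℝ)) : ℝ) := by
      funext t; exact (hsymm t).symm
    change Continuous ((Ici (0:ℝ)).restrict νinv)
    rw [hres]
    exact continuous_subtype_val.comp e.symm.continuous
  -- closure 𝕌 is contained in the closed set S
  have hclU : closure 𝕌 ⊆
      {q : ℝ × EuclideanSpace ℝ (Fin m) | 0 ≤ q.1 ∧ q.2 ∈ U ∧ q.1 + ‖q.2‖ = 1} := by
    apply closure_minimal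
    · rw [h𝕌]; rintro ⟨r, w⟩ ⟨h1, h2, h3⟩; exact ⟨le_of_lt h1, h2, h3⟩
    · exact IsClosed.inter (isClosed_le continuous_const continuous_fst)
        (IsClosed.inter (hUcl.preimage continuous_snd)
          (isClosed_eq (continuous_fst.add continuous_snd.norm) continuous_const))
  -- the key lemma: FF agrees with the rescaled dynamics on 𝕌
  have key : ∀ x ∉ C, ∀ q ∈ 𝕌,
      FF x q.1 q.2 = (1 + ν ‖(νinv (‖q.2‖ / q.1)) • (‖q.2‖⁻¹ • q.2)‖)⁻¹ •
        f x ((νinv (‖q.2‖ / q.1)) • (‖q.2‖⁻¹ • q.2)) := by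
    rintro x hx ⟨r, w⟩ hq
    have hq' := hq
    rw [h𝕌] at hq'
    obtain ⟨hr, hw, hsum⟩ := hq'
    simp only at hr hw hsum ⊢
    have hxcl : x ∈ closure Cᶜ := subset_closure hx
    have hlim := hFFlim x hxcl (r, w) (subset_closure hq)
    simp only at hlim
    haveI : (𝓝[>] r).NeBot := nhdsGT_neBot r
    by_cases hw0 : w = 0
    · subst hw0
      refine tendsto_nhds_unique hlim ?_
      simp only [norm_zero, smul_zero]
      exact tendsto_const_nhds
    · have hwpos : (0:ℝ) < ‖w‖ := norm_pos_iff.mpr hw0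
      set d : EuclideanSpace ℝ (Fin m) := ‖w‖⁻¹ • w with hd
      have hdU : d ∈ U := hUcone _ (inv_nonneg.mpr (norm_nonneg w)) w hw
      have hdnorm : ‖d‖ = 1 := by
        rw [hd, norm_smul, Real.norm_eq_abs, abs_of_nonneg (inv_nonneg.mpr (norm_nonneg w))]
        exact inv_mul_cancel₀ (ne_of_gt hwpos)
      set t₀ : ℝ := ‖w‖ / r with ht₀def
      have ht₀ : 0 ≤ t₀ := div_nonneg (norm_nonneg w) (le_of_lt hr)
      set c₀ : ℝ := νinv t₀ with hc₀def
      have hc₀ : 0 ≤ c₀ := hνinv_nonneg t₀ ht₀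
      have hbase : Tendsto (fun ρ : ℝ => ‖w‖ / ρ) (𝓝[>] r) (𝓝 t₀) :=
        (tendsto_const_nhds.div tendsto_id (ne_of_gt hr)).mono_left nhdsWithin_le_nhds
      have htt : Tendsto (fun ρ : ℝ => ‖w‖ / ρ) (𝓝[>] r) (𝓝[Ici 0] t₀) := by
        rw [tendsto_nhdsWithin_iff]
        refine ⟨hbase, ?_⟩
        filter_upwards [self_mem_nhdsWithin] with ρ hρ
        exact div_nonneg (norm_nonneg w) (le_of_lt (lt_trans hr hρ))
      have hct : Tendsto (fun ρ : ℝ => νinv (‖w‖ / ρ)) (𝓝[>] r) (𝓝 c₀) :=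
        Tendsto.comp (hcont_inv t₀ ht₀) htt
      have hut : Tendsto (fun ρ : ℝ => νinv (‖w‖ / ρ) • d) (𝓝[>] r) (𝓝 (c₀ • d)) :=
        hct.smul_const d
      have hmemU : ∀ ρ ∈ Ioi r, νinv (‖w‖ / ρ) • d ∈ U := fun ρ hρ =>
        hUcone _ (hνinv_nonneg _ (div_nonneg (norm_nonneg w) (le_of_lt (lt_trans hr hρ)))) d hdU
      have hpair : Tendsto (fun ρ : ℝ => (x, νinv (‖w‖ / ρ) • d)) (𝓝[>] r)
          (𝓝[Cᶜ ×ˢ U] (x, c₀ • d)) := by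
        rw [tendsto_nhdsWithin_iff]
        refine ⟨tendsto_const_nhds.prodMk_nhds hut, ?_⟩
        filter_upwards [self_mem_nhdsWithin] with ρ hρ
        exact ⟨hx, hmemU ρ hρ⟩
      have hcu : c₀ • d ∈ U := hUcone _ hc₀ d hdU
      have hfu : Tendsto (fun ρ : ℝ => f x (νinv (‖w‖ / ρ) • d)) (𝓝[>] r)
          (𝓝 (f x (c₀ • d))) := by
        have h := Tendsto.comp (hf (x, c₀ • d) ⟨hx, hcu⟩) hpair
        exact h
      have hνkey : ∀ ρ ∈ Ioi r, ν ‖νinv (‖w‖ / ρ) • d‖ = ‖w‖ / ρ := by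
        intro ρ hρ
        have h1 : 0 ≤ ‖w‖ / ρ := div_nonneg (norm_nonneg w) (le_of_lt (lt_trans hr hρ))
        rw [norm_smul, hdnorm, mul_one, Real.norm_eq_abs, abs_of_nonneg (hνinv_nonneg _ h1)]
        exact hνinv_right _ h1
      have hEq : (fun ρ : ℝ => (1 + ν ‖νinv (‖w‖ / ρ) • d‖)⁻¹ • f x (νinv (‖w‖ / ρ) • d))
          =ᶠ[𝓝[>] r] (fun ρ : ℝ => (1 + ‖w‖ / ρ)⁻¹ • f x (νinv (‖w‖ / ρ) • d)) := by
        filter_upwards [self_mem_nhdsWithin] with ρ hρ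
        rw [hνkey ρ hρ]
      have h1t₀ : (1:ℝ) + t₀ ≠ 0 := by linarith
      have hcoef : Tendsto (fun ρ : ℝ => (1 + ‖w‖ / ρ)⁻¹) (𝓝[>] r) (𝓝 (1 + t₀)⁻¹) :=
        (tendsto_const_nhds.add hbase).inv₀ h1t₀
      have hψ : Tendsto (fun ρ : ℝ => (1 + ‖w‖ / ρ)⁻¹ • f x (νinv (‖w‖ / ρ) • d)) (𝓝[>] r)
          (𝓝 ((1 + t₀)⁻¹ • f x (c₀ • d))) := hcoef.smul hfu
      have hφ : Tendsto (fun ρ : ℝ =>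
          (1 + ν ‖νinv (‖w‖ / ρ) • d‖)⁻¹ • f x (νinv (‖w‖ / ρ) • d)) (𝓝[>] r)
          (𝓝 ((1 + t₀)⁻¹ • f x (c₀ • d))) := Tendsto.congr' hEq.symm hψ
      have hval : ν ‖c₀ • d‖ = t₀ := by
        rw [norm_smul, hdnorm, mul_one, Real.norm_eq_abs, abs_of_nonneg hc₀]
        exact hνinv_right t₀ ht₀
      have := tendsto_nhds_unique hlim hφ
      rw [this, hval]
  -- main Hamiltonian equality
  have main : ∀ x ∉ C, ∀ p : EuclideanSpace ℝ (Fin n),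
      sInf {y : ℝ | ∃ u ∈ U, y = ⟪p, (1 + ν ‖u‖)⁻¹ • f x u⟫} =
      sInf {y : ℝ | ∃ q ∈ closure 𝕌, y = ⟪p, FF x q.1 q.2⟫} := by
    intro x hx p
    apply sInf_eq_of_between
    · -- A ⊆ B
      rintro y ⟨u, hu, rfl⟩
      by_cases hu0 : u = 0
      · subst hu0
        have hqU : ((1:ℝ), (0 : EuclideanSpace ℝ (Fin m))) ∈ 𝕌 := by
          rw [h𝕌]; exact ⟨one_pos, hu, by simp⟩
        refine ⟨((1:ℝ), (0 : EuclideanSpace ℝ (Fin m))), subset_closure hqU, ?_⟩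
        rw [key x hx _ hqU]
        simp
      · have hupos : (0:ℝ) < ‖u‖ := norm_pos_iff.mpr hu0
        set a : ℝ := ν ‖u‖ with hadef
        have ha : 0 < a := by
          have := hνmono (le_refl (0:ℝ)) (le_of_lt hupos) hupos
          rw [hν0] at this; exact this
        have h1a : (0:ℝ) < 1 + a := by linarith
        set s : ℝ := a / ((1 + a) * ‖u‖) with hsdef
        have hs : 0 < s := div_pos ha (mul_pos h1a hupos)
        have hsuU : s • u ∈ U := hUcone s (le_of_lt hs) u hu
        have hnorm : ‖s • u‖ = a / (1 + a) := by
          have h1a' : (1 + a) ≠ 0 := ne_of_gt h1a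
          have hun : ‖u‖ ≠ 0 := ne_of_gt hupos
          rw [norm_smul, Real.norm_eq_abs, abs_of_pos hs, hsdef]
          field_simp
        have hqU : ((1 + a)⁻¹, s • u) ∈ 𝕌 := by
          rw [h𝕌]
          refine ⟨inv_pos.mpr h1a, hsuU, ?_⟩
          simp only
          rw [hnorm]
          field_simp
        refine ⟨((1 + a)⁻¹, s • u), subset_closure hqU, ?_⟩
        rw [key x hx _ hqU]
        simp only
        have hratio : ‖s • u‖ / (1 + a)⁻¹ = a := by
          rw [hnorm]; field_simp
        have hinva : νinv a = ‖u‖ := by rw [hadef]; exact hνinv.1 (norm_nonneg u)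
        have hcoe : ‖u‖ * (a / (1 + a))⁻¹ * s = 1 := by
          have h1a' : (1 + a) ≠ 0 := ne_of_gt h1a
          have hun : ‖u‖ ≠ 0 := ne_of_gt hupos
          have ha' : a ≠ 0 := ne_of_gt ha
          rw [hsdef]
          field_simp
        have hE : νinv (‖s • u‖ / (1 + a)⁻¹) • (‖s • u‖⁻¹ • (s • u)) = u := by
          rw [hratio, hinva, smul_smul, smul_smul, hnorm, hcoe, one_smul]
        rw [hE]
    · -- B ⊆ closure A
      rintro y ⟨q, hq, rfl⟩
      obtain ⟨hq1, hq2, hq3⟩ := hclU hq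
      haveI : (𝓝[>] q.1).NeBot := nhdsGT_neBot q.1
      have hlim := hFFlim x (subset_closure hx) q hq
      have hinner : Tendsto (fun ρ : ℝ =>
          ⟪p, (1 + ν ‖(νinv (‖q.2‖ / ρ)) • (‖q.2‖⁻¹ • q.2)‖)⁻¹ •
            f x ((νinv (‖q.2‖ / ρ)) • (‖q.2‖⁻¹ • q.2))⟫) (𝓝[>] q.1)
          (𝓝 ⟪p, FF x q.1 q.2⟫) := tendsto_const_nhds.inner hlim
      apply mem_closure_of_tendsto hinner
      filter_upwards [self_mem_nhdsWithin] with ρ hρ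
      have hρpos : (0:ℝ) < ρ := lt_of_le_of_lt hq1 hρ
      refine ⟨(νinv (‖q.2‖ / ρ)) • (‖q.2‖⁻¹ • q.2), ?_, rfl⟩
      exact hUcone _ (hνinv_nonneg _ (div_nonneg (norm_nonneg q.2) (le_of_lt hρpos))) _
        (hUcone _ (inv_nonneg.mpr (norm_nonneg q.2)) q.2 hq2)
  refine ⟨main, ?_⟩
  -- the CLF equivalence
  intro W
  constructor
  · rintro ⟨h1, h2, h3, h4, h5, γ, hγ1, hγ2, hγ3, hγ4⟩
    refine ⟨h1, h2, h3, h4, h5, γ, hγ1, hγ2, hγ3, ?_⟩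
    intro x hx p hp
    rw [← main x hx p]
    exact hγ4 x hx p hp
  · rintro ⟨h1, h2, h3, h4, h5, γ, hγ1, hγ2, hγ3, hγ4⟩
    refine ⟨h1, h2, h3, h4, h5, γ, hγ1, hγ2, hγ3, ?_⟩
    intro x hx p hp
    rw [main x hx p]
    exact hγ4 x hx p hp
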